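/- For all a, b ∈ ℤY one has θ(S_• * (a / (S_• * b))) = θ(S_• * a) / θ(S_• * b) − θ(S_• * a) * θ(S_• * b), where θ denotes the direct sum of the Coxeter transformations θ_n acting on ℤY. -/

import Mathlib

/-- A planar binary tree: either the trivial tree (a leaf) or an ordered pair of
planar binary trees. -/
inductive PBT : Type
  | leaf : PBT
  | node : PBT → PBT → PBT
  deriving DecidableEq

namespace PBT

/-- Number of internal vertices of a planar binary tree. -/
def size : PBT → ℕ
  | leaf => 0
  | node a b => a.size + b.size + 1

/-- One covering move of the Tamari order: `Rot x y` holds when `y` is obtained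
from `x` by replacing some subtree of the form `((a,b),c)` by `(a,(b,c))`. -/
inductive Rot : PBT → PBT → Prop
  | rot (a b c : PBT) : Rot (node (node a b) c) (node a (node b c))
  | left {a a' : PBT} (b : PBT) : Rot a a' → Rot (node a b) (node a' b)
  | right (a : PBT) {b b' : PBT} : Rot b b' → Rot (node a b) (node a b')

/-- The Tamari order: reflexive-transitive closure of `Rot`. -/
def tle (x y : PBT) : Prop := Relation.ReflTransGen Rot x y

/-- Grafting of `x` on the leftmost leaf of `y` : the operation `x / y`. -/
def overG : PBT → PBT → PBT
  | x, leaf => x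
  | x, node y₁ y₂ => node (overG x y₁) y₂

/-- Grafting of `y` on the rightmost leaf of `x` : the operation `x ∖ y`. -/
def under : PBT → PBT → PBT
  | leaf, y => y
  | node x₁ x₂, y => node x₁ (under x₂ y)

theorem Rot.size_eq {x y : PBT} (h : Rot x y) : x.size = y.size := by
  induction h <;> simp [size] <;> omega

theorem tle.size_eq {x y : PBT} (h : tle x y) : x.size = y.size := by
  induction h with
  | refl => rfl
  | tail _ h ih => rw [ih, h.size_eq]

theorem finite_size_le (n : ℕ) : {z : PBT | z.size ≤ n}.Finite := by
  induction n with
  | zero =>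
    apply Set.Finite.subset (Set.finite_singleton leaf)
    rintro (_ | ⟨a, b⟩) hz
    · simp
    · simp [size] at hz
  | succ n ih =>
    apply Set.Finite.subset ((Set.Finite.image2 node ih ih).insert leaf)
    rintro (_ | ⟨a, b⟩) hz
    · simp
    · simp only [Set.mem_setOf_eq, size] at hz
      exact Set.mem_insert_iff.mpr
        (Or.inr (Set.mem_image2.mpr ⟨a, by simp only [Set.mem_setOf_eq]; omega, b, by simp only [Set.mem_setOf_eq]; omega, rfl⟩))

theorem finite_size (n : ℕ) : {z : PBT | z.size = n}.Finite :=
  (finite_size_le n).subset fun _ hz => le_of_eq hz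

theorem finite_tle_right (x : PBT) : {y : PBT | tle y x}.Finite :=
  (finite_size x.size).subset fun _ hy => hy.size_eq

theorem finite_tle_left (x : PBT) : {y : PBT | tle x y}.Finite :=
  (finite_size x.size).subset fun _ hy => hy.size_eq.symm

theorem finite_interval (x y : PBT) :
    {z : PBT | tle (overG x y) z ∧ tle z (under x y)}.Finite :=
  (finite_tle_right (under x y)).subset fun _ hz => hz.2

end PBT

/-- The free abelian group `ℤY = ⊕ₙ ℤYₙ` on the set of all planar binary trees. -/
abbrev ZY : Type := PBT →₀ ℤ

namespace PBT

/-- The basis element `S_x` of `ℤY`. -/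
noncomputable def S (x : PBT) : ZY := Finsupp.single x 1

/-- The class `P_x = ∑_{y ≤ x} S_y` of the projective module. -/
noncomputable def P (x : PBT) : ZY := ∑ y ∈ (finite_tle_right x).toFinset, S y

/-- The class `I_x = ∑_{y ≥ x} S_y` of the injective module. -/
noncomputable def I (x : PBT) : ZY := ∑ y ∈ (finite_tle_left x).toFinset, S y

/-- The Loday-Ronco product on basis elements:
`S_x * S_y = ∑_{x/y ≤ z ≤ x∖y} S_z`. -/
noncomputable def starB (x y : PBT) : ZY := ∑ z ∈ (finite_interval x y).toFinset, S z

/-- Bilinear extension of a product defined on basis elements. -/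
noncomputable def bilin (f : PBT → PBT → ZY) (a b : ZY) : ZY :=
  a.sum fun x ax => b.sum fun y byy => (ax * byy) • f x y

/-- The product `/` on `ℤY`, with `S_x / S_y = S_{x/y}`. -/
noncomputable def overM : ZY → ZY → ZY := bilin fun x y => S (x.overG y)

/-- The product `∖` on `ℤY`, with `S_x ∖ S_y = S_{x∖y}`. -/
noncomputable def underM : ZY → ZY → ZY := bilin fun x y => S (x.under y)

/-- The Loday-Ronco product `*` on `ℤY`. -/
noncomputable def starM : ZY → ZY → ZY := bilin starB

/-- The unique planar binary tree `•` with one internal vertex. -/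
def dot : PBT := node leaf leaf

end PBT

namespace PBT

/-! ### Basic order lemmas -/

theorem size_over (x y : PBT) : (overG x y).size = x.size + y.size := by
  induction y with
  | leaf => simp [overG, size]
  | node y₁ y₂ ih₁ ih₂ => simp [overG, size, ih₁]; omega

theorem size_under (x y : PBT) : (under x y).size = x.size + y.size := by
  induction x with
  | leaf => simp [under, size]
  | node x₁ x₂ ih₁ ih₂ => simp [under, size, ih₂]; omega

/-- A weight that strictly decreases along rotations. -/
def weight : PBT → ℕ
  | leaf => 0
  | node a b => weight a + weight b + size a

theorem Rot.weight_lt {x y : PBT} (h : Rot x y) : weight y < weight x := by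
  induction h with
  | rot a b c => simp [weight, size]; omega
  | left b h ih => have := h.size_eq; simp [weight]; omega
  | right a h ih => have := h.size_eq; simp [weight]; omega

theorem tle.weight_le {x y : PBT} (h : tle x y) : weight y ≤ weight x := by
  induction h with
  | refl => exact le_refl _
  | tail _ h ih => exact le_trans h.weight_lt.le ih

theorem tle.antisymm' {x y : PBT} (h : tle x y) (h' : tle y x) : x = y := by
  rcases h.cases_head with rfl | ⟨c, hc, hcy⟩
  · rfl
  · have h1 := tle.weight_le h'
    have h2 := tle.weight_le hcy
    have h3 := hc.weight_lt
    omega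

theorem not_rot_leaf_left {t : PBT} : ¬ Rot leaf t := fun h => by cases h

theorem not_rot_leaf_right {t : PBT} : ¬ Rot t leaf := fun h => by cases h

theorem rot_node_inv {z A B : PBT} (h : Rot z (node A B)) :
    (∃ b c, z = node (node A b) c ∧ B = node b c) ∨
    (∃ z₁, z = node z₁ B ∧ Rot z₁ A) ∨
    (∃ z₂, z = node A z₂ ∧ Rot z₂ B) := by
  cases h with
  | rot a b c => exact Or.inl ⟨b, c, rfl, rfl⟩
  | left b h => exact Or.inr (Or.inl ⟨_, rfl, h⟩)
  | right a h => exact Or.inr (Or.inr ⟨_, rfl, h⟩)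

theorem tle_node_left {a a' : PBT} (b : PBT) (h : tle a a') :
    tle (node a b) (node a' b) :=
  Relation.ReflTransGen.lift (fun x => node x b) (fun _ _ h => Rot.left b h) _ _ h

theorem tle_node_right (a : PBT) {b b' : PBT} (h : tle b b') :
    tle (node a b) (node a b') :=
  Relation.ReflTransGen.lift (fun x => node a x) (fun _ _ h => Rot.right a h) _ _ h

theorem tle_node_congr {a a' b b' : PBT} (ha : tle a a') (hb : tle b b') :
    tle (node a b) (node a' b') :=
  (tle_node_left b ha).trans (tle_node_right a' hb)

theorem over_leaf (y : PBT) : overG leaf y = y := by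
  induction y with
  | leaf => rfl
  | node y₁ y₂ ih₁ _ => simp [overG, ih₁]

theorem over_mono_left {u u' : PBT} (v : PBT) (h : tle u u') :
    tle (overG u v) (overG u' v) := by
  induction v with
  | leaf => exact h
  | node v₁ v₂ ih₁ _ => exact tle_node_left v₂ ih₁

theorem rot_over_right (u : PBT) {v v' : PBT} (h : Rot v v') :
    Rot (overG u v) (overG u v') := by
  induction h with
  | rot a b c => exact Rot.rot _ _ _
  | left b h ih => exact Rot.left b ih
  | right a h ih => exact Rot.right _ h

theorem over_mono_right (u : PBT) {v v' : PBT} (h : tle v v') :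
    tle (overG u v) (overG u v') :=
  Relation.ReflTransGen.lift (fun x => overG u x) (fun _ _ h => rot_over_right u h) _ _ h

theorem over_mono {u u' v v' : PBT} (hu : tle u u') (hv : tle v v') :
    tle (overG u v) (overG u' v') :=
  (over_mono_left v hu).trans (over_mono_right u' hv)

theorem tle_leaf_eq {a : PBT} (h : tle a leaf) : a = leaf := by
  have := h.size_eq
  cases a with
  | leaf => rfl
  | node a b => simp [size] at this

theorem size_eq_zero {a : PBT} (h : a.size = 0) : a = leaf := by
  cases a with
  | leaf => rfl
  | node a b => simp [size] at h

theorem over_ne_leaf {p : PBT} (r : PBT) (h : p ≠ leaf) : overG p r ≠ leaf := by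
  induction r with
  | leaf => exact h
  | node r₁ r₂ ih₁ _ => simp [overG]

theorem over_inj {u u' v v' : PBT} (h : overG u v = overG u' v')
    (hs : size u = size u') : u = u' ∧ v = v' := by
  induction v generalizing v' with
  | leaf =>
    cases v' with
    | leaf => exact ⟨h, rfl⟩
    | node a b =>
      exfalso
      simp only [overG] at h
      have := congrArg size h
      rw [size, size_over] at this
      omega
  | node v₁ v₂ ih₁ _ =>
    cases v' with
    | leaf =>
      exfalso
      simp only [overG] at h
      have := congrArg size h
      rw [size, size_over] at this
      omega
    | node w₁ w₂ =>
      simp only [overG, node.injEq] at h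
      obtain ⟨h1, h2⟩ := h
      obtain ⟨hu, hv⟩ := ih₁ h1
      exact ⟨hu, by rw [hv, h2]⟩

end PBT
namespace PBT

/-! ### Deletion of the leftmost internal vertex -/

/-- Delete the leftmost internal vertex of a tree. -/
def del : PBT → PBT
  | leaf => leaf
  | node leaf t => t
  | node (node a b) t => node (del (node a b)) t

@[simp] theorem del_node_leaf (t : PBT) : del (node leaf t) = t := rfl

theorem del_node_of_ne {X : PBT} (t : PBT) (h : X ≠ leaf) :
    del (node X t) = node (del X) t := by
  cases X with
  | leaf => exact absurd rfl h
  | node a b => rfl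

theorem size_del {x : PBT} (h : x ≠ leaf) : (del x).size + 1 = x.size := by
  induction x with
  | leaf => exact absurd rfl h
  | node a b iha _ =>
    cases a with
    | leaf => simp [size]
    | node a₁ a₂ =>
      rw [del_node_of_ne b (by simp)]
      have := iha (by simp)
      simp [size] at this ⊢
      omega

theorem rot_target_node {x y : PBT} (h : Rot x y) : ∃ a b, y = node a b := by
  cases h with
  | rot a b c => exact ⟨_, _, rfl⟩
  | left b _ => exact ⟨_, _, rfl⟩
  | right a _ => exact ⟨_, _, rfl⟩

theorem rot_source_node {x y : PBT} (h : Rot x y) : ∃ a b, x = node a b := by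
  cases h with
  | rot a b c => exact ⟨_, _, rfl⟩
  | left b _ => exact ⟨_, _, rfl⟩
  | right a _ => exact ⟨_, _, rfl⟩

theorem rot_del {z z' : PBT} (h : Rot z z') : tle (del z) (del z') := by
  induction h with
  | rot a b c =>
    cases a with
    | leaf => simp only [del_node_leaf]; exact Relation.ReflTransGen.refl
    | node a₁ a₂ =>
      rw [del_node_of_ne c (by simp), del_node_of_ne (node b c) (by simp),
        del_node_of_ne b (by simp)]
      exact Relation.ReflTransGen.single (Rot.rot _ _ _)
  | left b h ih =>
    obtain ⟨a₁, a₂, rfl⟩ := rot_source_node h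
    obtain ⟨a₁', a₂', rfl⟩ := rot_target_node h
    rw [del_node_of_ne b (by simp), del_node_of_ne b (by simp)]
    exact tle_node_left b ih
  | right a h ih =>
    cases a with
    | leaf => simpa [del, tle] using Relation.ReflTransGen.single h
    | node a₁ a₂ =>
      rw [del_node_of_ne (X := node a₁ a₂) _ (by simp),
        del_node_of_ne (X := node a₁ a₂) _ (by simp)]
      exact tle_node_right _ (Relation.ReflTransGen.single h)

theorem tle_del {z z' : PBT} (h : tle z z') : tle (del z) (del z') := by
  induction h with
  | refl => exact Relation.ReflTransGen.refl
  | tail _ h ih => exact ih.trans (rot_del h)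

theorem del_over {p : PBT} (r : PBT) (h : p ≠ leaf) :
    del (overG p r) = overG (del p) r := by
  induction r with
  | leaf => rfl
  | node r₁ r₂ ih₁ _ =>
    simp only [overG]
    rw [del_node_of_ne r₂ (over_ne_leaf r₁ h), ih₁]

@[simp] theorem del_dot : del (node leaf leaf) = leaf := rfl

/-- `over c r ≤ node c (del r)`. -/
theorem tle_over_node_del {r : PBT} (c : PBT) (h : r ≠ leaf) :
    tle (overG c r) (node c (del r)) := by
  induction r with
  | leaf => exact absurd rfl h
  | node r₁ r₂ ih₁ _ =>
    cases r₁ with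
    | leaf => simp only [overG, del_node_leaf]; exact Relation.ReflTransGen.refl
    | node a b =>
      rw [del_node_of_ne r₂ (by simp)]
      simp only [overG]
      exact ((tle_node_left r₂ (ih₁ (by simp))).trans
        (Relation.ReflTransGen.single (Rot.rot _ _ _)))

/-- `over (node c leaf) t ≤ node c t`. -/
theorem tle_over_node_leaf (c t : PBT) : tle (overG (node c leaf) t) (node c t) := by
  induction t with
  | leaf => exact Relation.ReflTransGen.refl
  | node t₁ t₂ ih₁ _ =>
    simp only [overG]
    exact (tle_node_left t₂ ih₁).trans (Relation.ReflTransGen.single (Rot.rot _ _ _))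

/-- `over (node c leaf) (del r) ≤ over c r`. -/
theorem tle_over_del {r : PBT} (c : PBT) (h : r ≠ leaf) :
    tle (overG (node c leaf) (del r)) (overG c r) := by
  induction r with
  | leaf => exact absurd rfl h
  | node r₁ r₂ ih₁ _ =>
    cases r₁ with
    | leaf => simpa [overG] using tle_over_node_leaf c r₂
    | node a b =>
      rw [del_node_of_ne r₂ (by simp)]
      simp only [overG]
      exact tle_node_left r₂ (ih₁ (by simp))

/-! ### Left spine -/

/-- `lsp s t` : `s` is a subtree on the left spine of `t`. -/
inductive lsp : PBT → PBT → Prop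
  | refl (t : PBT) : lsp t t
  | cons {s a : PBT} (b : PBT) : lsp s a → lsp s (node a b)

theorem lsp_size {s t : PBT} (h : lsp s t) : size s ≤ size t := by
  induction h with
  | refl => exact le_refl _
  | cons b _ ih => simp [size]; omega

theorem lsp_node_inv {s a b : PBT} (h : lsp s (node a b)) :
    s = node a b ∨ lsp s a := by
  cases h with
  | refl => exact Or.inl rfl
  | cons _ h => exact Or.inr h

theorem lsp_size_eq {s t : PBT} (h : lsp s t) (hs : size s = size t) : s = t := by
  cases h with
  | refl => rfl
  | cons b h => have := lsp_size h; simp [size] at hs; omega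

theorem lsp_over {s p : PBT} (r : PBT) (h : lsp s p) : lsp s (overG p r) := by
  induction r with
  | leaf => exact h
  | node r₁ r₂ ih₁ _ => exact lsp.cons r₂ ih₁

theorem lsp_over_inv {τ p r : PBT} (h : lsp τ (overG p r)) :
    lsp τ p ∨ ∃ r', lsp r' r ∧ r' ≠ leaf ∧ τ = overG p r' := by
  induction r with
  | leaf => exact Or.inl h
  | node r₁ r₂ ih₁ _ =>
    simp only [overG] at h
    rcases lsp_node_inv h with rfl | h'
    · exact Or.inr ⟨node r₁ r₂, lsp.refl _, by simp, rfl⟩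
    · rcases ih₁ h' with h'' | ⟨r', hr', hne, rfl⟩
      · exact Or.inl h''
      · exact Or.inr ⟨r', lsp.cons r₂ hr', hne, rfl⟩

/-- Left-spine comparison lemma: spines above are dominated by spines below. -/
theorem lss_rot {w z : PBT} (h : Rot w z) :
    ∀ s, lsp s z → ∃ τ, lsp τ w ∧ size τ = size s ∧ tle τ s := by
  induction h with
  | rot a b c =>
    intro s hs
    rcases lsp_node_inv hs with rfl | hs'
    · exact ⟨node (node a b) c, lsp.refl _, (Rot.rot a b c).size_eq,
        Relation.ReflTransGen.single (Rot.rot a b c)⟩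
    · exact ⟨s, lsp.cons c (lsp.cons b hs'), rfl, Relation.ReflTransGen.refl⟩
  | left b h ih =>
    intro s hs
    rcases lsp_node_inv hs with rfl | hs'
    · exact ⟨_, lsp.refl _, ((Rot.left b h).size_eq), Relation.ReflTransGen.single (Rot.left b h)⟩
    · obtain ⟨τ, h1, h2, h3⟩ := ih s hs'
      exact ⟨τ, lsp.cons b h1, h2, h3⟩
  | right a h ih =>
    intro s hs
    rcases lsp_node_inv hs with rfl | hs'
    · exact ⟨_, lsp.refl _, (Rot.right a h).size_eq, Relation.ReflTransGen.single (Rot.right a h)⟩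
    · exact ⟨s, lsp.cons _ hs', rfl, Relation.ReflTransGen.refl⟩

theorem lss {w z : PBT} (h : tle w z) :
    ∀ s, lsp s z → ∃ τ, lsp τ w ∧ size τ = size s ∧ tle τ s := by
  induction h with
  | refl => exact fun s hs => ⟨s, hs, rfl, Relation.ReflTransGen.refl⟩
  | tail _ hrot ih =>
    intro s hs
    obtain ⟨τ', h1, h2, h3⟩ := lss_rot hrot s hs
    obtain ⟨τ, g1, g2, g3⟩ := ih τ' h1
    exact ⟨τ, g1, g2.trans h2, g3.trans h3⟩

/-! ### Inversion for `over` -/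

theorem over_inv_rot {z u v : PBT} (h : Rot z (overG u v)) :
    ∃ u₀ v₀, z = overG u₀ v₀ ∧ size u₀ = size u ∧ tle u₀ u ∧ tle v₀ v := by
  induction v generalizing z with
  | leaf =>
    exact ⟨z, leaf, rfl, h.size_eq, Relation.ReflTransGen.single h,
      Relation.ReflTransGen.refl⟩
  | node v₁ v₂ ih₁ _ =>
    simp only [overG] at h
    rcases rot_node_inv h with ⟨b, c, rfl, rfl⟩ | ⟨z₁, rfl, hz₁⟩ | ⟨z₂, rfl, hz₂⟩
    · refine ⟨u, node (node v₁ b) c, by simp [overG], rfl, Relation.ReflTransGen.refl,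
        Relation.ReflTransGen.single (Rot.rot _ _ _)⟩
    · obtain ⟨u₀, v₀, rfl, hs, hu, hv⟩ := ih₁ hz₁
      exact ⟨u₀, node v₀ v₂, by simp [overG], hs, hu, tle_node_left v₂ hv⟩
    · exact ⟨u, node v₁ z₂, by simp [overG], rfl, Relation.ReflTransGen.refl,
        tle_node_right v₁ (Relation.ReflTransGen.single hz₂)⟩

theorem over_inv {z u v : PBT} (h : tle z (overG u v)) :
    ∃ u₀ v₀, z = overG u₀ v₀ ∧ size u₀ = size u ∧ tle u₀ u ∧ tle v₀ v := by
  induction h using Relation.ReflTransGen.head_induction_on with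
  | refl => exact ⟨u, v, rfl, rfl, Relation.ReflTransGen.refl, Relation.ReflTransGen.refl⟩
  | head hrot _ ih =>
    obtain ⟨u₁, v₁, rfl, hs₁, hu₁, hv₁⟩ := ih
    obtain ⟨u₀, v₀, rfl, hs₀, hu₀, hv₀⟩ := over_inv_rot hrot
    exact ⟨u₀, v₀, rfl, hs₀.trans hs₁, hu₀.trans hu₁, hv₀.trans hv₁⟩

end PBT
namespace PBT

/-! ### Upsets and downsets of special trees -/

/-- Characterization of the upset of `node leaf x`. -/
theorem up_char {x z : PBT} (h : tle (node leaf x) z) :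
    ∃ u, z = node leaf u ∧ tle x u := by
  induction h with
  | refl => exact ⟨x, rfl, Relation.ReflTransGen.refl⟩
  | tail _ hrot ih =>
    obtain ⟨u, rfl, hu⟩ := ih
    cases hrot with
    | left b h => exact absurd h not_rot_leaf_left
    | right a h => exact ⟨_, rfl, hu.trans (Relation.ReflTransGen.single h)⟩

/-- Characterization of the downset of `node s leaf`. -/
theorem down_char {s t : PBT} (h : tle t (node s leaf)) :
    ∃ t', t = node t' leaf ∧ tle t' s := by
  induction h using Relation.ReflTransGen.head_induction_on with
  | refl => exact ⟨s, rfl, Relation.ReflTransGen.refl⟩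
  | head hrot _ ih =>
    obtain ⟨y', rfl, hy⟩ := ih
    rcases rot_node_inv hrot with ⟨b, c, rfl, hbc⟩ | ⟨z₁, rfl, hz₁⟩ | ⟨z₂, rfl, hz₂⟩
    · cases hbc
    · exact ⟨z₁, rfl, (Relation.ReflTransGen.single hz₁).trans hy⟩
    · exact absurd hz₂ not_rot_leaf_right

/-- Characterization of the upset of `node (node leaf x) y`. -/
theorem v_char {x y z : PBT} (h : tle (node (node leaf x) y) z) :
    (∃ u v, z = node u v ∧ tle (node leaf x) u ∧ tle y v) ∨
    tle (node leaf (node x y)) z := by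
  induction h with
  | refl =>
    exact Or.inl ⟨node leaf x, y, rfl, Relation.ReflTransGen.refl,
      Relation.ReflTransGen.refl⟩
  | tail _ hrot ih =>
    rcases ih with ⟨u, v, rfl, hXu, hyv⟩ | h2
    · cases hrot with
      | rot a b c =>
        obtain ⟨u', huev, hxu'⟩ := up_char hXu
        injection huev with h1 h2
        subst h1; subst h2
        exact Or.inr (tle_node_right leaf (tle_node_congr hxu' hyv))
      | left b h =>
        exact Or.inl ⟨_, _, rfl, hXu.trans (Relation.ReflTransGen.single h), hyv⟩
      | right a h =>
        exact Or.inl ⟨_, _, rfl, hXu, hyv.trans (Relation.ReflTransGen.single h)⟩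
    · exact Or.inr (h2.trans (Relation.ReflTransGen.single hrot))

/-! ### The key characterizations -/

theorem del_low : ∀ n (c : PBT), size c = n → ∀ {v r : PBT},
    tle (overG (node c leaf) v) (overG c r) → tle v (del r) := by
  intro n
  induction n using Nat.strong_induction_on with
  | _ n ih =>
    intro c hc v r h
    cases c with
    | leaf =>
      rw [over_leaf] at h
      have h2 := tle_del h
      rwa [del_over v (by simp), del_dot, over_leaf] at h2
    | node c₁ c₂ =>
      have h2 := tle_del h
      rw [del_over v (by simp), del_over r (by simp),
        del_node_of_ne (X := node c₁ c₂) _ (by simp)] at h2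
      have hsz : (del (node c₁ c₂)).size + 1 = size (node c₁ c₂) := size_del (by simp)
      exact ih _ (by omega) _ rfl h2

/-- Membership in the interval `[over (node c' leaf) v, under (node c' leaf) v]`. -/
theorem char_x {c' v z : PBT} :
    (tle (overG (node c' leaf) v) z ∧ tle z (under (node c' leaf) v)) ↔
    ∃ r, r ≠ leaf ∧ z = overG c' r ∧ del r = v := by
  have hund : under (node c' leaf) v = node c' v := rfl
  constructor
  · rintro ⟨hlow, hup⟩
    rw [hund] at hup
    have hup' : tle z (overG c' (node leaf v)) := by simpa [overG] using hup
    obtain ⟨u₀, v₀, rfl, hs, hu₀, hv₀⟩ := over_inv hup'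
    have hv₀ne : v₀ ≠ leaf := by
      intro h; subst h
      have := hv₀.size_eq; simp [size] at this
    -- u₀ = c'
    obtain ⟨τ, hτl, hτs, hτle⟩ := lss hlow u₀ (lsp_over v₀ (lsp.refl u₀))
    have hτc : τ = c' := by
      rcases lsp_over_inv hτl with hτp | ⟨r', hr', hrne, rfl⟩
      · rcases lsp_node_inv hτp with rfl | hτc'
        · exfalso; rw [hs] at hτs; simp [size] at hτs
        · exact lsp_size_eq hτc' (by rw [hτs, hs])
      · exfalso
        have h1 := size_over (node c' leaf) r'
        have h2 : 1 ≤ size r' := by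
          cases r' with
          | leaf => exact absurd rfl hrne
          | node a b => simp [size]
        rw [hs] at hτs
        simp [size] at h1 hτs
        omega
    rw [hτc] at hτle
    obtain rfl : c' = u₀ := hτle.antisymm' hu₀
    refine ⟨v₀, hv₀ne, rfl, ?_⟩
    have hle1 : tle (del v₀) v := by simpa using tle_del hv₀
    have hle2 : tle v (del v₀) := del_low _ c' rfl hlow
    exact hle1.antisymm' hle2
  · rintro ⟨r, hne, rfl, rfl⟩
    exact ⟨tle_over_del c' hne, by rw [hund]; exact tle_over_node_del c' hne⟩

/-- The key downset characterization : `z ≤ node c d` iff `z = over c₀ r` with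
`c₀ ≤ c` of the right size and `del r ≤ d`. -/
theorem key {c d z : PBT} :
    tle z (node c d) ↔
    ∃ c₀ r, z = overG c₀ r ∧ size c₀ = size c ∧ tle c₀ c ∧ r ≠ leaf ∧ tle (del r) d := by
  constructor
  · intro h
    induction h using Relation.ReflTransGen.head_induction_on with
    | refl =>
      exact ⟨c, node leaf d, by simp [overG], rfl, Relation.ReflTransGen.refl, by simp,
        by simp; exact Relation.ReflTransGen.refl⟩
    | head hrot _ ih =>
      obtain ⟨c₁, r₁, rfl, hs₁, hc₁, hne₁, hd₁⟩ := ih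
      obtain ⟨c₀, r₀, rfl, hs₀, hc₀, hr₀⟩ := over_inv_rot hrot
      have hr₀ne : r₀ ≠ leaf := by
        intro h; subst h
        have := hr₀.size_eq
        cases r₁ with
        | leaf => exact hne₁ rfl
        | node a b => simp [size] at this
      exact ⟨c₀, r₀, rfl, hs₀.trans hs₁, hc₀.trans hc₁, hr₀ne,
        (tle_del hr₀).trans hd₁⟩
  · rintro ⟨c₀, r, rfl, hs, hc, hne, hd⟩
    exact (over_mono_left r hc).trans ((tle_over_node_del c hne).trans
      (tle_node_right c hd))

/-! ### The mirror involution -/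

/-- Mirror of a tree. -/
def mir : PBT → PBT
  | leaf => leaf
  | node a b => node (mir b) (mir a)

@[simp] theorem mir_mir (t : PBT) : mir (mir t) = t := by
  induction t with
  | leaf => rfl
  | node a b iha ihb => simp [mir, iha, ihb]

@[simp] theorem size_mir (t : PBT) : size (mir t) = size t := by
  induction t with
  | leaf => rfl
  | node a b iha ihb => simp [mir, size, iha, ihb]; omega

theorem rot_mir {a b : PBT} (h : Rot a b) : Rot (mir b) (mir a) := by
  induction h with
  | rot a b c => exact Rot.rot _ _ _
  | left b h ih => exact Rot.right _ ih
  | right a h ih => exact Rot.left _ ih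

theorem tle_mir {a b : PBT} (h : tle a b) : tle (mir b) (mir a) := by
  induction h with
  | refl => exact Relation.ReflTransGen.refl
  | tail _ hrot ih => exact (Relation.ReflTransGen.single (rot_mir hrot)).trans ih

theorem tle_mir_iff {a b : PBT} : tle a b ↔ tle (mir b) (mir a) :=
  ⟨tle_mir, fun h => by have := tle_mir h; simpa using this⟩

theorem mir_over (x y : PBT) : mir (overG x y) = under (mir y) (mir x) := by
  induction y with
  | leaf => rfl
  | node y₁ y₂ ih₁ _ => simp [overG, mir, under, ih₁]

theorem mir_under (x y : PBT) : mir (under x y) = overG (mir y) (mir x) := by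
  induction x with
  | leaf => rfl
  | node x₁ x₂ _ ih₂ => simp [under, mir, overG, ih₂]

end PBT
namespace PBT
open scoped Classical

set_option maxHeartbeats 1000000

/-! ### Finsupp machinery -/

theorem mem_D {x y : PBT} : y ∈ (finite_tle_right x).toFinset ↔ tle y x := by
  rw [Set.Finite.mem_toFinset]; rfl

theorem mem_U {x y : PBT} : y ∈ (finite_tle_left x).toFinset ↔ tle x y := by
  rw [Set.Finite.mem_toFinset]; rfl

theorem mem_ivl {u v z : PBT} : z ∈ (finite_interval u v).toFinset ↔
    tle (overG u v) z ∧ tle z (under u v) := by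
  rw [Set.Finite.mem_toFinset]; rfl

theorem S_apply (x t : PBT) : S x t = if x = t then 1 else 0 :=
  Finsupp.single_apply

theorem sumS_apply (A : Finset PBT) (t : PBT) :
    (∑ x ∈ A, S x) t = if t ∈ A then 1 else 0 := by
  rw [Finset.sum_apply']
  simp only [S_apply]
  rw [Finset.sum_ite_eq' A t (fun _ => (1 : ℤ))]

theorem P_apply (x t : PBT) : P x t = if tle t x then 1 else 0 := by
  rw [P, sumS_apply]
  by_cases h : tle t x
  · rw [if_pos (mem_D.mpr h), if_pos h]
  · rw [if_neg (fun hm => h (mem_D.mp hm)), if_neg h]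

theorem I_apply (x t : PBT) : I x t = if tle x t then 1 else 0 := by
  rw [I, sumS_apply]
  by_cases h : tle x t
  · rw [if_pos (mem_U.mpr h), if_pos h]
  · rw [if_neg (fun hm => h (mem_U.mp hm)), if_neg h]

theorem starB_apply (u v t : PBT) :
    starB u v t = if tle (overG u v) t ∧ tle t (under u v) then 1 else 0 := by
  rw [starB, sumS_apply]
  by_cases h : tle (overG u v) t ∧ tle t (under u v)
  · rw [if_pos (mem_ivl.mpr h), if_pos h]
  · rw [if_neg (fun hm => h (mem_ivl.mp hm)), if_neg h]

/-! ### Bilinearity -/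

theorem bilin_zero_left (f : PBT → PBT → ZY) (b : ZY) : bilin f 0 b = 0 :=
  Finsupp.sum_zero_index

theorem bilin_zero_right (f : PBT → PBT → ZY) (a : ZY) : bilin f a 0 = 0 := by
  rw [bilin]
  simp [Finsupp.sum_zero_index, Finsupp.sum]

theorem bilin_add_left (f : PBT → PBT → ZY) (a₁ a₂ b : ZY) :
    bilin f (a₁ + a₂) b = bilin f a₁ b + bilin f a₂ b := by
  rw [bilin, bilin, bilin]
  apply Finsupp.sum_add_index'
  · intro x; simp [Finsupp.sum]
  · intro x c₁ c₂
    rw [← Finsupp.sum_add]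
    congr 1; ext y d
    rw [add_mul, add_smul]

theorem bilin_add_right (f : PBT → PBT → ZY) (a b₁ b₂ : ZY) :
    bilin f a (b₁ + b₂) = bilin f a b₁ + bilin f a b₂ := by
  rw [bilin, bilin, bilin, ← Finsupp.sum_add]
  apply Finsupp.sum_congr
  intro x _
  apply Finsupp.sum_add_index'
  · intro y; simp
  · intro y d₁ d₂
    rw [mul_add, add_smul]

theorem bilin_neg_left (f : PBT → PBT → ZY) (a b : ZY) :
    bilin f (-a) b = - bilin f a b := by
  have h := bilin_add_left f (-a) a b
  rw [neg_add_cancel, bilin_zero_left] at h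
  exact eq_neg_of_add_eq_zero_left h.symm

theorem bilin_neg_right (f : PBT → PBT → ZY) (a b : ZY) :
    bilin f a (-b) = - bilin f a b := by
  have h := bilin_add_right f a (-b) b
  rw [neg_add_cancel, bilin_zero_right] at h
  exact eq_neg_of_add_eq_zero_left h.symm

theorem sumS_sum (B : Finset PBT) (g : PBT → ZY) :
    (∑ y ∈ B, S y).sum (fun y c => c • g y) = ∑ y ∈ B, g y := by
  classical
  induction B using Finset.induction_on with
  | empty => simp [Finsupp.sum_zero_index]
  | insert _ _ hnotmem ih =>
    rw [Finset.sum_insert hnotmem, Finset.sum_insert hnotmem,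
      Finsupp.sum_add_index' (by intro y; simp) (by intro y d₁ d₂; rw [add_smul]),
      S, Finsupp.sum_single_index (by simp), one_smul, ih]

theorem bilin_single_left (f : PBT → PBT → ZY) (x : PBT) (b : ZY) :
    bilin f (S x) b = b.sum fun y c => c • f x y := by
  rw [bilin, S, Finsupp.sum_single_index]
  · simp only [one_mul]
  · simp [Finsupp.sum]

theorem bilin_single_sum (f : PBT → PBT → ZY) (x : PBT) (B : Finset PBT) :
    bilin f (S x) (∑ y ∈ B, S y) = ∑ y ∈ B, f x y := by
  rw [bilin_single_left, sumS_sum]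

theorem bilin_sum_sum (f : PBT → PBT → ZY) (A B : Finset PBT) :
    bilin f (∑ x ∈ A, S x) (∑ y ∈ B, S y) = ∑ x ∈ A, ∑ y ∈ B, f x y := by
  classical
  induction A using Finset.induction_on with
  | empty => simp [bilin_zero_left]
  | insert _ _ hnotmem ih =>
    rw [Finset.sum_insert hnotmem, Finset.sum_insert hnotmem, bilin_add_left,
      bilin_single_sum, ih]

/-! ### Counting helpers -/

theorem sum_boole_unique {A : Finset PBT} {Q : PBT → Prop} {R : Prop}
    [DecidablePred Q] [Decidable R]
    (h1 : ∀ x ∈ A, Q x → R)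
    (h2 : R → ∃ x, x ∈ A ∧ Q x ∧ ∀ x' ∈ A, Q x' → x' = x) :
    (∑ x ∈ A, if Q x then (1:ℤ) else 0) = if R then 1 else 0 := by
  by_cases hR : R
  · obtain ⟨x₀, hx₀, hQ, huniq⟩ := h2 hR
    rw [if_pos hR, Finset.sum_eq_single_of_mem x₀ hx₀]
    · rw [if_pos hQ]
    · intro b hb hne
      rw [if_neg (fun hQb => hne (huniq b hb hQb))]
  · rw [if_neg hR, Finset.sum_eq_zero]
    intro x hx
    rw [if_neg (fun hQx => hR (h1 x hx hQx))]

theorem sum2_boole_unique {A B : Finset PBT} {Q : PBT → PBT → Prop} {R : Prop}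
    [∀ x y, Decidable (Q x y)] [Decidable R]
    (h1 : ∀ x ∈ A, ∀ y ∈ B, Q x y → R)
    (h2 : R → ∃ x y, x ∈ A ∧ y ∈ B ∧ Q x y ∧
      ∀ x' ∈ A, ∀ y' ∈ B, Q x' y' → x' = x ∧ y' = y) :
    (∑ x ∈ A, ∑ y ∈ B, if Q x y then (1:ℤ) else 0) = if R then 1 else 0 := by
  by_cases hR : R
  · obtain ⟨x₀, y₀, hx₀, hy₀, hQ, huniq⟩ := h2 hR
    rw [if_pos hR, Finset.sum_eq_single_of_mem x₀ hx₀]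
    · rw [Finset.sum_eq_single_of_mem y₀ hy₀]
      · rw [if_pos hQ]
      · intro b hb hne
        rw [if_neg (fun hQb => hne (huniq x₀ hx₀ b hb hQb).2)]
    · intro a ha hne
      apply Finset.sum_eq_zero
      intro y hy
      rw [if_neg (fun hQb => hne (huniq a ha y hy hQb).1)]
  · rw [if_neg hR]
    apply Finset.sum_eq_zero
    intro x hx
    apply Finset.sum_eq_zero
    intro y hy
    rw [if_neg (fun hQx => hR (h1 x hx y hy hQx))]

end PBT
namespace PBT
open scoped Classical

theorem tle_refl (x : PBT) : tle x x := Relation.ReflTransGen.refl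

/-- Identity (A): `P x / P y = P (x/y)`. -/
theorem overM_P (x y : PBT) : overM (P x) (P y) = P (overG x y) := by
  rw [overM, P, P, bilin_sum_sum]
  ext t
  simp only [Finset.sum_apply', S_apply, P_apply]
  refine sum2_boole_unique ?_ ?_
  · rintro u hu v hv rfl
    exact over_mono (mem_D.mp hu) (mem_D.mp hv)
  · intro hR
    obtain ⟨u₀, v₀, rfl, hs, hu₀, hv₀⟩ := over_inv hR
    refine ⟨u₀, v₀, mem_D.mpr hu₀, mem_D.mpr hv₀, rfl, ?_⟩
    rintro u' hu' v' hv' h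
    have hsz : size u' = size u₀ :=
      (tle.size_eq (mem_D.mp hu')).trans (tle.size_eq hu₀).symm
    exact over_inj h hsz

/-- Identity (B): `S• * P y = P (node leaf y)`. -/
theorem starM_dot_P (y : PBT) : starM (S dot) (P y) = P (node leaf y) := by
  rw [starM, P, bilin_single_sum]
  ext t
  simp only [Finset.sum_apply', starB_apply, P_apply]
  refine sum_boole_unique ?_ ?_
  · intro v hv hQ
    obtain ⟨r, hne, heq, hdel⟩ := char_x.mp hQ
    rw [over_leaf] at heq
    subst heq
    exact key.mpr ⟨leaf, t, (over_leaf t).symm, rfl, tle_refl leaf, hne,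
      by rw [hdel]; exact mem_D.mp hv⟩
  · intro hR
    obtain ⟨c₀, r, heq, hs, _, hne, hd⟩ := key.mp hR
    obtain rfl : c₀ = leaf := size_eq_zero (by simpa [size] using hs)
    rw [over_leaf] at heq
    subst heq
    refine ⟨del t, mem_D.mpr hd, char_x.mpr ⟨t, hne, (over_leaf t).symm, rfl⟩, ?_⟩
    intro v' hv' hQ'
    obtain ⟨r', hne', heq', hdel'⟩ := char_x.mp hQ'
    rw [over_leaf] at heq'
    rw [← hdel', heq']

/-- mirror of an interval membership. -/
theorem ivl_mir {u v t : PBT} :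
    (tle (overG u v) t ∧ tle t (under u v)) ↔
    (tle (overG (mir v) (mir u)) (mir t) ∧ tle (mir t) (under (mir v) (mir u))) := by
  rw [tle_mir_iff (a := overG u v) (b := t), tle_mir_iff (a := t) (b := under u v),
    mir_over, mir_under]
  exact and_comm

/-- Identity (IVs): `I(node leaf x) * I(node leaf y) = I(node (node leaf x) y)`. -/
theorem starM_I (x y : PBT) :
    starM (I (node leaf x)) (I (node leaf y)) = I (node (node leaf x) y) := by
  rw [starM, I, I, bilin_sum_sum]
  ext t
  simp only [Finset.sum_apply', starB_apply, I_apply]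
  refine sum2_boole_unique ?_ ?_
  · intro u hu v hv hQ
    obtain ⟨u', rfl, hu'⟩ := up_char (mem_U.mp hu)
    obtain ⟨v', rfl, hv'⟩ := up_char (mem_U.mp hv)
    have hQ' := ivl_mir.mp hQ
    have hmirv : mir (node leaf v') = node (mir v') leaf := rfl
    rw [hmirv] at hQ'
    obtain ⟨r, hne, heq, hdel⟩ := char_x.mp hQ'
    have hkey : tle (mir t) (node (mir y) (node (mir x) leaf)) := by
      refine key.mpr ⟨mir v', r, heq, ?_, tle_mir hv', hne, ?_⟩
      · simp [tle.size_eq hv']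
      · rw [hdel]
        show tle (mir (node leaf u')) _
        have : mir (node leaf u') = node (mir u') leaf := rfl
        rw [this]
        exact tle_node_left leaf (tle_mir hu')
    have := tle_mir hkey
    simp only [mir_mir] at this
    have hmm : mir (node (mir y) (node (mir x) leaf)) = node (node leaf x) y := by
      simp [mir]
    rwa [hmm] at this
  · intro hR
    have hR' : tle (mir t) (node (mir y) (node (mir x) leaf)) := by
      have := tle_mir hR
      simpa [mir] using this
    obtain ⟨c₀, r, heq, hs, hc₀, hne, hd⟩ := key.mp hR'
    obtain ⟨w, hweq, hw⟩ := down_char hd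
    refine ⟨node leaf (mir w), node leaf (mir c₀), ?_, ?_, ?_, ?_⟩
    · refine mem_U.mpr (tle_node_right leaf ?_)
      have := tle_mir hw; simpa using this
    · refine mem_U.mpr (tle_node_right leaf ?_)
      have := tle_mir hc₀; simpa using this
    · refine ivl_mir.mpr ?_
      have h1 : mir (node leaf (mir c₀)) = node c₀ leaf := by simp [mir]
      have h2 : mir (node leaf (mir w)) = node w leaf := by simp [mir]
      rw [h1, h2]
      exact char_x.mpr ⟨r, hne, heq, by rw [hweq]⟩
    · intro u₂ hu₂ v₂ hv₂ hQ₂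
      obtain ⟨u₂', rfl, hu₂'⟩ := up_char (mem_U.mp hu₂)
      obtain ⟨v₂', rfl, hv₂'⟩ := up_char (mem_U.mp hv₂)
      have hQ₂' := ivl_mir.mp hQ₂
      have hmv : mir (node leaf v₂') = node (mir v₂') leaf := rfl
      rw [hmv] at hQ₂'
      obtain ⟨r₂, hne₂, heq₂, hdel₂⟩ := char_x.mp hQ₂'
      have hsz : size (mir v₂') = size c₀ := by
        rw [hs]
        simp [tle.size_eq hv₂', tle.size_eq hc₀]
      obtain ⟨hcc, hrr⟩ := over_inj (heq₂.symm.trans heq) hsz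
      constructor
      · have : mir u₂' = w := by
          have := hdel₂
          rw [hrr, hweq] at this
          have h3 : mir (node leaf u₂') = node (mir u₂') leaf := rfl
          rw [h3] at this
          injection this.symm
        have := congrArg mir this
        simp at this
        rw [this]
      · have : mir v₂' = c₀ := hcc
        have := congrArg mir this
        simp at this
        rw [this]

/-- Identity (V): `I X / I Y = I(node X y) - I(node leaf (node x y))`. -/
theorem overM_I (x y : PBT) :
    overM (I (node leaf x)) (I (node leaf y)) =
      I (node (node leaf x) y) - I (node leaf (node x y)) := by
  rw [overM, I, I, bilin_sum_sum]
  ext t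
  simp only [Finset.sum_apply', S_apply, Finsupp.sub_apply, I_apply]
  have hR21 : tle (node leaf (node x y)) t → tle (node (node leaf x) y) t :=
    fun h => (Relation.ReflTransGen.single (Rot.rot leaf x y)).trans h
  have hsub : (if tle (node (node leaf x) y) t then (1:ℤ) else 0) -
      (if tle (node leaf (node x y)) t then (1:ℤ) else 0) =
      if tle (node (node leaf x) y) t ∧ ¬ tle (node leaf (node x y)) t then 1 else 0 := by
    by_cases h2 : tle (node leaf (node x y)) t
    · rw [if_pos h2, if_pos (hR21 h2), if_neg (fun hc => hc.2 h2)]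
      ring
    · rw [if_neg h2]
      by_cases h1 : tle (node (node leaf x) y) t
      · rw [if_pos h1, if_pos ⟨h1, h2⟩]; ring
      · rw [if_neg h1, if_neg (fun hc => h1 hc.1)]; ring
  rw [hsub]
  refine sum2_boole_unique ?_ ?_
  · rintro u hu v hv rfl
    obtain ⟨v', rfl, hv'⟩ := up_char (mem_U.mp hv)
    have hov : overG u (node leaf v') = node u v' := by simp [overG]
    rw [hov]
    constructor
    · exact tle_node_congr (mem_U.mp hu) hv'
    · intro hcon
      obtain ⟨w, hweq, _⟩ := up_char hcon
      have hsz := tle.size_eq (mem_U.mp hu)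
      injection hweq with h1 h2
      rw [← h1] at hsz
      simp [size] at hsz
      omega
  · rintro ⟨hR1, hR2⟩
    rcases v_char hR1 with ⟨u, v', rfl, hXu, hyv⟩ | h2
    · refine ⟨u, node leaf v', mem_U.mpr hXu, mem_U.mpr (tle_node_right leaf hyv),
        by simp [overG], ?_⟩
      intro u₂ hu₂ v₂ hv₂ hQ₂
      obtain ⟨v₂', rfl, _⟩ := up_char (mem_U.mp hv₂)
      have hov₂ : overG u₂ (node leaf v₂') = node u₂ v₂' := by simp [overG]
      rw [hov₂] at hQ₂
      injection hQ₂ with h1 h2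
      exact ⟨h1, by rw [h2]⟩
    · exact absurd h2 hR2

end PBT
namespace PBT
open scoped Classical

/-! ### The classes `P x` generate `ℤY` -/

theorem S_mem_closure_aux : ∀ n (t : PBT), ((finite_tle_right t).toFinset).card ≤ n →
    S t ∈ AddSubgroup.closure (Set.range P) := by
  intro n
  induction n with
  | zero =>
    intro t h
    exfalso
    have : t ∈ (finite_tle_right t).toFinset := mem_D.mpr (tle_refl t)
    have := Finset.card_pos.mpr ⟨t, this⟩
    omega
  | succ n ih =>
    intro t hcard
    have hPt : P t ∈ AddSubgroup.closure (Set.range P) :=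
      AddSubgroup.subset_closure ⟨t, rfl⟩
    have hmem : t ∈ (finite_tle_right t).toFinset := mem_D.mpr (tle_refl t)
    have hsplit : P t = S t + ∑ y ∈ ((finite_tle_right t).toFinset).erase t, S y := by
      rw [P, ← Finset.add_sum_erase _ _ hmem]
    have hS : S t = P t - ∑ y ∈ ((finite_tle_right t).toFinset).erase t, S y := by
      rw [hsplit]; abel
    rw [hS]
    refine AddSubgroup.sub_mem _ hPt (AddSubgroup.sum_mem _ ?_)
    intro y hy
    obtain ⟨hyne, hyt⟩ := Finset.mem_erase.mp hy
    have hys := mem_D.mp hyt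
    apply ih
    have hsub : (finite_tle_right y).toFinset ⊂ (finite_tle_right t).toFinset := by
      constructor
      · intro z hz
        exact mem_D.mpr ((mem_D.mp hz).trans hys)
      · intro hsup
        have : t ∈ (finite_tle_right y).toFinset := hsup hmem
        exact hyne ((mem_D.mp this).antisymm' hys).symm
    have := Finset.card_lt_card hsub
    omega

theorem mem_closure_P (a : ZY) : a ∈ AddSubgroup.closure (Set.range P) := by
  have ha : a = a.sum fun t c => c • S t := by
    conv_lhs => rw [← Finsupp.sum_single a]
    apply Finsupp.sum_congr
    intro t _
    rw [S, Finsupp.smul_single, smul_eq_mul, mul_one]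
  rw [ha, Finsupp.sum]
  refine AddSubgroup.sum_mem _ ?_
  intro t _
  exact AddSubgroup.zsmul_mem _ (S_mem_closure_aux _ t le_rfl) _


theorem overM_add_left (a₁ a₂ b : ZY) : overM (a₁ + a₂) b = overM a₁ b + overM a₂ b :=
  bilin_add_left _ _ _ _

theorem overM_add_right (a b₁ b₂ : ZY) : overM a (b₁ + b₂) = overM a b₁ + overM a b₂ :=
  bilin_add_right _ _ _ _

theorem overM_neg_left (a b : ZY) : overM (-a) b = - overM a b := bilin_neg_left _ _ _

theorem overM_neg_right (a b : ZY) : overM a (-b) = - overM a b := bilin_neg_right _ _ _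

theorem overM_zero_left (b : ZY) : overM 0 b = 0 := bilin_zero_left _ _

theorem overM_zero_right (a : ZY) : overM a 0 = 0 := bilin_zero_right _ _

theorem starM_add_left (a₁ a₂ b : ZY) : starM (a₁ + a₂) b = starM a₁ b + starM a₂ b :=
  bilin_add_left _ _ _ _

theorem starM_add_right (a b₁ b₂ : ZY) : starM a (b₁ + b₂) = starM a b₁ + starM a b₂ :=
  bilin_add_right _ _ _ _

theorem starM_neg_left (a b : ZY) : starM (-a) b = - starM a b := bilin_neg_left _ _ _

theorem starM_neg_right (a b : ZY) : starM a (-b) = - starM a b := bilin_neg_right _ _ _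

theorem starM_zero_left (b : ZY) : starM 0 b = 0 := bilin_zero_left _ _

theorem starM_zero_right (a : ZY) : starM a 0 = 0 := bilin_zero_right _ _

end PBT

open PBT in
/-- The Coxeter transformation `θ` satisfies
`θ(S_• * (a / (S_• * b))) = θ(S_• * a) / θ(S_• * b) − θ(S_• * a) * θ(S_• * b)`. -/
theorem coxeter_transformation_carac2 (θ : ZY →+ ZY)
    (hθ : ∀ x : PBT, θ (P x) = - I x) (a b : ZY) :
    θ (starM (S dot) (overM a (starM (S dot) b))) =
      overM (θ (starM (S dot) a)) (θ (starM (S dot) b))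
        - starM (θ (starM (S dot) a)) (θ (starM (S dot) b)) := by
  have base : ∀ x y : PBT,
      θ (starM (S dot) (overM (P x) (starM (S dot) (P y)))) =
      overM (θ (starM (S dot) (P x))) (θ (starM (S dot) (P y)))
        - starM (θ (starM (S dot) (P x))) (θ (starM (S dot) (P y))) := by
    intro x y
    rw [starM_dot_P y, overM_P, show overG x (node leaf y) = node x y by simp [overG],
      starM_dot_P, starM_dot_P x, hθ, hθ, hθ]
    rw [overM_neg_left, overM_neg_right, neg_neg, starM_neg_left, starM_neg_right,
      neg_neg, overM_I, starM_I]
    abel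
  -- general `a`, `b` by closure induction
  refine AddSubgroup.closure_induction₂ (k := Set.range P)
    (p := fun a b _ _ =>
      θ (starM (S dot) (overM a (starM (S dot) b))) =
      overM (θ (starM (S dot) a)) (θ (starM (S dot) b))
        - starM (θ (starM (S dot) a)) (θ (starM (S dot) b)))
    ?_ ?_ ?_ ?_ ?_ ?_ ?_ (mem_closure_P a) (mem_closure_P b)
  · rintro a' b' ⟨x, rfl⟩ ⟨y, rfl⟩
    exact base x y
  · -- zero left
    intro b' _
    simp only [overM_zero_left, starM_zero_right, starM_zero_left, map_zero, sub_self]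
  · -- zero right
    intro a' _
    simp only [starM_zero_right, overM_zero_right, map_zero, sub_self]
  · -- add left
    intro a₁ a₂ b' _ _ _ ih₁ ih₂
    simp only [overM_add_left, starM_add_right, map_add, starM_add_left]
    rw [ih₁, ih₂]
    abel
  · -- add right
    intro b₁ b₂ a' _ _ _ ih₁ ih₂
    simp only [starM_add_right, overM_add_right, map_add]
    rw [ih₁, ih₂]
    abel
  · -- neg left
    intro a' b' _ _ ih
    simp only [overM_neg_left, starM_neg_right, starM_neg_left, map_neg]
    rw [ih]
    abel
  · -- neg right
    intro a' b' _ _ ih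
    simp only [starM_neg_right, overM_neg_right, map_neg]
    rw [ih]
    abel
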